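/- arXiv:2311.08114 — 2 statements merged into one kernel-verified Lean document; each statement's English description precedes it below -/
import Mathlib

section
/- For D ⊆ B(z, ε) ⊂ ℝ³ with |D| ≥ c ε³ for some constant c > 0 independent of ε, the averaged geometric constant A_{∂D} := (1/|∂D|) ∫_{∂D} ∫_D |x-y|^{-1} dx dS_y satisfies c₁ ε² ≤ A_{∂D} ≤ c₂ ε² for constants c₁, c₂ > 0 independent of ε. -/
open MeasureTheory Real Set

local notation "E3" => EuclideanSpace ℝ (Fin 3)

lemma integrableOn_inv_norm_sub (y : EuclideanSpace ℝ (Fin 3)) {R : ℝ} (hR : 0 < R) :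
    IntegrableOn (fun x : EuclideanSpace ℝ (Fin 3) => ‖x - y‖⁻¹) (Metric.ball y R) := by
  have hf : Measurable (fun x : EuclideanSpace ℝ (Fin 3) => ‖x - y‖⁻¹) :=
    ((measurable_id.sub_const y).norm).inv
  refine ⟨hf.aestronglyMeasurable, ?_⟩
  rw [hasFiniteIntegral_iff_ofReal
    (Filter.Eventually.of_forall fun x => inv_nonneg.2 (norm_nonneg _))]
  set μ := volume.restrict (Metric.ball y R) with hμ
  rw [lintegral_eq_lintegral_meas_lt μ
    (Filter.Eventually.of_forall fun x => inv_nonneg.2 (norm_nonneg _)) hf.aemeasurable]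
  have hsplit : Ioi (0:ℝ) = Ioc 0 R⁻¹ ∪ Ioi R⁻¹ := (Ioc_union_Ioi_eq_Ioi (by positivity)).symm
  rw [hsplit, lintegral_union measurableSet_Ioi Ioc_disjoint_Ioi_same]
  have h1 : ∫⁻ t in Ioc (0:ℝ) R⁻¹, μ {a | t < ‖a - y‖⁻¹} < ⊤ := by
    calc ∫⁻ t in Ioc (0:ℝ) R⁻¹, μ {a | t < ‖a - y‖⁻¹}
        ≤ ∫⁻ _ in Ioc (0:ℝ) R⁻¹, μ univ := lintegral_mono fun t => measure_mono (subset_univ _)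
      _ = μ univ * volume (Ioc (0:ℝ) R⁻¹) := by rw [setLIntegral_const]
      _ < ⊤ := by
          apply ENNReal.mul_lt_top _ (by simp)
          simpa [μ, Measure.restrict_apply] using measure_ball_lt_top (μ := (volume : Measure E3)) (x := y) (r := R)
  have h2 : ∫⁻ t in Ioi R⁻¹, μ {a | t < ‖a - y‖⁻¹} < ⊤ := by
    have hint : IntegrableOn (fun t : ℝ => (t⁻¹)^3) (Ioi R⁻¹) := by
      have := integrableOn_Ioi_rpow_of_lt (a := (-3:ℝ)) (by norm_num) (c := R⁻¹) (by positivity)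
      apply this.congr_fun ?_ measurableSet_Ioi
      intro t ht
      have h0 : (0:ℝ) < t := lt_trans (by positivity) ht
      show t ^ (-3:ℝ) = t⁻¹ ^ 3
      rw [Real.rpow_neg h0.le, show ((3:ℝ)) = ((3:ℕ):ℝ) by norm_num, Real.rpow_natCast, inv_pow]
    calc ∫⁻ t in Ioi R⁻¹, μ {a | t < ‖a - y‖⁻¹}
        ≤ ∫⁻ t in Ioi R⁻¹,
            ENNReal.ofReal ((t⁻¹)^3) * volume (Metric.ball (0:E3) 1) := by
          apply setLIntegral_mono ((ENNReal.measurable_ofReal.comp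
            ((measurable_id.inv).pow_const 3)).mul_const _)
          intro t ht
          have h0 : (0:ℝ) < t := lt_trans (by positivity) ht
          have hsub : {a : E3 | t < ‖a - y‖⁻¹} ⊆ Metric.ball y t⁻¹ := by
            intro a ha
            simp only [mem_setOf_eq] at ha
            have hna : (0:ℝ) < ‖a - y‖ := by
              rcases (norm_nonneg (a - y)).lt_or_eq with h | h
              · exact h
              · exfalso; rw [← h] at ha; simp at ha; linarith
            have : (‖a - y‖⁻¹)⁻¹ < t⁻¹ := inv_strictAnti₀ h0 ha
            rw [inv_inv] at this
            simpa [Metric.mem_ball, dist_eq_norm] using this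
          calc μ {a : E3 | t < ‖a - y‖⁻¹} ≤ volume {a : E3 | t < ‖a - y‖⁻¹} :=
                Measure.restrict_le_self _
            _ ≤ volume (Metric.ball y t⁻¹) := measure_mono hsub
            _ = ENNReal.ofReal ((t⁻¹)^3) * volume (Metric.ball (0:E3) 1) := by
                rw [(volume : Measure E3).addHaar_ball y (by positivity : (0:ℝ) ≤ t⁻¹)]
                norm_num [finrank_euclideanSpace]
      _ = (∫⁻ t in Ioi R⁻¹, ENNReal.ofReal ((t⁻¹)^3)) * volume (Metric.ball (0:E3) 1) :=
          lintegral_mul_const _ (ENNReal.measurable_ofReal.comp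
            ((measurable_id.inv).pow_const 3))
      _ < ⊤ := ENNReal.mul_lt_top hint.lintegral_lt_top measure_ball_lt_top
  exact ENNReal.add_lt_top.mpr ⟨h1, h2⟩

lemma ball_integral_kernel (y : EuclideanSpace ℝ (Fin 3)) {R : ℝ} (hR : 0 < R) :
    ∫ x in Metric.ball y R, ‖x - y‖⁻¹ =
      R ^ 2 * ∫ x in Metric.ball (0 : EuclideanSpace ℝ (Fin 3)) 1, ‖x‖⁻¹ := by
  have htrans : ∫ x in Metric.ball y R, ‖x - y‖⁻¹
      = ∫ x in Metric.ball (0:E3) R, ‖x‖⁻¹ := by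
    have hmp : MeasurePreserving (fun x : E3 => x + y) volume volume :=
      measurePreserving_add_right volume y
    have hemb : MeasurableEmbedding (fun x : E3 => x + y) :=
      (MeasurableEquiv.addRight y).measurableEmbedding
    have hset : (fun x : E3 => x + y) ⁻¹' Metric.ball y R = Metric.ball 0 R := by
      ext x
      simp [Metric.mem_ball, dist_eq_norm]
    have := hmp.setIntegral_preimage_emb hemb (fun x => ‖x - y‖⁻¹) (Metric.ball y R)
    rw [hset] at this
    simp only [add_sub_cancel_right] at this
    exact this.symm
  rw [htrans]
  have hscale := Measure.setIntegral_comp_smul_of_pos (volume : Measure E3)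
    (fun x : E3 => ‖x‖⁻¹) (Metric.ball (0:E3) 1) hR
  rw [smul_unitBall_of_pos hR] at hscale
  simp only [norm_smul, Real.norm_eq_abs, abs_of_pos hR, mul_inv, smul_eq_mul] at hscale
  rw [integral_const_mul] at hscale
  have h3 : Module.finrank ℝ (EuclideanSpace ℝ (Fin 3)) = 3 := by
    simp [finrank_euclideanSpace]
  rw [h3] at hscale
  have hR0 : R ≠ 0 := hR.ne'
  calc ∫ x in Metric.ball (0:E3) R, ‖x‖⁻¹
      = R^3 * ((R^3)⁻¹ * ∫ x in Metric.ball (0:E3) R, ‖x‖⁻¹) := by field_simp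
    _ = R^3 * (R⁻¹ * ∫ x in Metric.ball (0:E3) 1, ‖x‖⁻¹) := by rw [← hscale]
    _ = R^2 * ∫ x in Metric.ball (0:E3) 1, ‖x‖⁻¹ := by field_simp

theorem stmt4 (c : ℝ) (hc : 0 < c) :
    ∃ c₁ > (0:ℝ), ∃ c₂ > (0:ℝ), ∀ (ε : ℝ), 0 < ε →
      ∀ (z : E3) (D : Set E3) (ν : Measure E3) (_ : IsFiniteMeasure ν),
      MeasurableSet D →
      D ⊆ Metric.ball z ε →
      c * ε ^ 3 ≤ (volume D).toReal →
      ν ≠ 0 →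
      (∀ᵐ y ∂ν, y ∈ frontier D) →
      (c₁ * ε ^ 2 ≤
          (ν Set.univ).toReal⁻¹ * ∫ y, (∫ x in D, 1 / ‖x - y‖) ∂ν) ∧
      ((ν Set.univ).toReal⁻¹ * ∫ y, (∫ x in D, 1 / ‖x - y‖) ∂ν
          ≤ c₂ * ε ^ 2) := by
  set C₁ := ∫ x in Metric.ball (0:E3) 1, ‖x‖⁻¹ with hC₁def
  have hC₁ : 0 ≤ C₁ :=
    setIntegral_nonneg measurableSet_ball (fun x _ => inv_nonneg.2 (norm_nonneg _))
  refine ⟨c/2, by positivity, 4*(C₁+1), by positivity, ?_⟩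
  intro ε hε z D ν hνfin hDmeas hDsub hvol hν hfr
  simp only [one_div]
  have h2ε : (0:ℝ) < 2*ε := by linarith
  have hvolD : volume D ≠ ⊤ :=
    ne_top_of_le_ne_top measure_ball_lt_top.ne (measure_mono hDsub)
  have hDball : ∀ y ∈ frontier D, D ⊆ Metric.ball y (2*ε) := by
    intro y hy x hx
    have hyz : dist y z ≤ ε := by
      have h1 : y ∈ closure D := frontier_subset_closure hy
      have h2 : closure D ⊆ closure (Metric.ball z ε) := closure_mono hDsub
      rw [closure_ball z hε.ne'] at h2
      exact Metric.mem_closedBall.1 (h2 h1)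
    have hxz : dist x z < ε := hDsub hx
    rw [Metric.mem_ball]
    calc dist x y ≤ dist x z + dist z y := dist_triangle _ _ _
      _ < ε + ε := by rw [dist_comm z y]; linarith
      _ = 2*ε := by ring
  have hIntOn : ∀ y ∈ frontier D, IntegrableOn (fun x : E3 => ‖x - y‖⁻¹) D := fun y hy =>
    (integrableOn_inv_norm_sub y h2ε).mono_set (hDball y hy)
  have hlow : ∀ y ∈ frontier D, c/2 * ε^2 ≤ ∫ x in D, ‖x - y‖⁻¹ := by
    intro y hy
    have hne : ∀ᵐ x ∂(volume : Measure E3), x ≠ y := by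
      rw [ae_iff]
      simpa [not_not] using measure_singleton (α := E3) y
    have hmono : ∫ _x in D, ((2*ε)⁻¹ : ℝ) ≤ ∫ x in D, ‖x - y‖⁻¹ := by
      apply integral_mono_ae (integrableOn_const (C := ((2*ε)⁻¹ : ℝ)) hvolD) (hIntOn y hy)
      filter_upwards [ae_restrict_of_ae hne, ae_restrict_mem hDmeas] with x hxne hxD
      have h1 : 0 < ‖x - y‖ := by
        rw [norm_pos_iff]
        exact sub_ne_zero_of_ne hxne
      have h2 : ‖x - y‖ ≤ 2*ε := by
        have := hDball y hy hxD
        rw [Metric.mem_ball, dist_eq_norm] at this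
        linarith
      exact inv_anti₀ h1 h2
    calc c/2 * ε^2 = (2*ε)⁻¹ * (c * ε^3) := by field_simp
      _ ≤ (2*ε)⁻¹ * (volume D).toReal := mul_le_mul_of_nonneg_left hvol (by positivity)
      _ = ∫ _x in D, ((2*ε)⁻¹ : ℝ) := by rw [setIntegral_const, smul_eq_mul, mul_comm]; rfl
      _ ≤ ∫ x in D, ‖x - y‖⁻¹ := hmono
  have hup : ∀ y ∈ frontier D, ∫ x in D, ‖x - y‖⁻¹ ≤ 4*(C₁+1) * ε^2 := by
    intro y hy
    have h1 : ∫ x in D, ‖x - y‖⁻¹ ≤ ∫ x in Metric.ball y (2*ε), ‖x - y‖⁻¹ :=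
      setIntegral_mono_set (integrableOn_inv_norm_sub y h2ε)
        (Filter.Eventually.of_forall fun x => inv_nonneg.2 (norm_nonneg _))
        ((hDball y hy).eventuallyLE)
    rw [ball_integral_kernel y h2ε] at h1
    calc ∫ x in D, ‖x - y‖⁻¹ ≤ (2*ε)^2 * C₁ := h1
      _ ≤ 4*(C₁+1)*ε^2 := by nlinarith [sq_nonneg ε]
  have hA_sm : StronglyMeasurable (fun y : E3 => ∫ x in D, ‖x - y‖⁻¹) := by
    have hm : StronglyMeasurable (fun p : E3 × E3 => ‖p.2 - p.1‖⁻¹) :=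
      ((measurable_snd.sub measurable_fst).norm.inv).stronglyMeasurable
    exact hm.integral_prod_right'
  have hAnn : ∀ y : E3, 0 ≤ ∫ x in D, ‖x - y‖⁻¹ := fun y =>
    setIntegral_nonneg hDmeas fun x _ => inv_nonneg.2 (norm_nonneg _)
  have hIntA : Integrable (fun y : E3 => ∫ x in D, ‖x - y‖⁻¹) ν := by
    refine Integrable.mono' (integrable_const (4*(C₁+1)*ε^2)) hA_sm.aestronglyMeasurable ?_
    filter_upwards [hfr] with y hy
    rw [Real.norm_of_nonneg (hAnn y)]
    exact hup y hy
  set M := (ν Set.univ).toReal with hMdef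
  have hM : 0 < M :=
    ENNReal.toReal_pos (Measure.measure_univ_ne_zero.2 hν) (measure_ne_top ν _)
  have hlowint : (c/2*ε^2) * M ≤ ∫ y, (∫ x in D, ‖x - y‖⁻¹) ∂ν := by
    have := integral_mono_ae (integrable_const (c/2*ε^2)) hIntA
      (by filter_upwards [hfr] with y hy; exact hlow y hy)
    rwa [integral_const, smul_eq_mul, mul_comm] at this
  have hupint : ∫ y, (∫ x in D, ‖x - y‖⁻¹) ∂ν ≤ (4*(C₁+1)*ε^2) * M := by
    have := integral_mono_ae hIntA (integrable_const (4*(C₁+1)*ε^2))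
      (by filter_upwards [hfr] with y hy; exact hup y hy)
    rwa [integral_const, smul_eq_mul, mul_comm] at this
  constructor
  · have h := mul_le_mul_of_nonneg_left hlowint (inv_nonneg.2 hM.le)
    calc c/2 * ε^2 = M⁻¹ * ((c/2*ε^2) * M) := by field_simp
      _ ≤ M⁻¹ * ∫ y, (∫ x in D, ‖x - y‖⁻¹) ∂ν := h
  · have h := mul_le_mul_of_nonneg_left hupint (inv_nonneg.2 hM.le)
    calc M⁻¹ * ∫ y, (∫ x in D, ‖x - y‖⁻¹) ∂ν ≤ M⁻¹ * ((4*(C₁+1)*ε^2) * M) := h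
      _ = 4*(C₁+1) * ε^2 := by field_simp
end

section
/- Let B(m,n) = ∫_{ℝ³} ρ⁻¹(x) ∇m·∇n̄ dx + s² ∫_{ℝ³} k⁻¹(x) m n̄ dx be the sesquilinear form with s = σ + iμ, σ > 0, and ρ, k bounded positive functions bounded away from 0. Then Re(B(m, s·m)) ≥ c σ min{1, σ²} ‖m‖²_{H¹(ℝ³)} for all m ∈ H¹(ℝ³), with c > 0 depending only on the bounds for ρ and k. -/
open MeasureTheory Real Set Complex

local notation "E3" => EuclideanSpace ℝ (Fin 3)

theorem stmt14 (c : ℝ) (hc : 1 ≤ c) :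
    ∃ C > (0:ℝ), ∀ (σ μ : ℝ), 0 < σ →
      ∀ (ρ k : E3 → ℝ),
      (∀ x, c⁻¹ ≤ ρ x ∧ ρ x ≤ c) →
      (∀ x, c⁻¹ ≤ k x ∧ k x ≤ c) →
      ∀ (m : E3 → ℂ),
      Integrable (fun x : E3 => ‖fderiv ℝ m x‖ ^ 2) →
      Integrable (fun x : E3 => ‖m x‖ ^ 2) →
      Integrable (fun x : E3 => (ρ x)⁻¹ * ‖fderiv ℝ m x‖ ^ 2) →
      Integrable (fun x : E3 => (k x)⁻¹ * ‖m x‖ ^ 2) →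
      C * σ * min 1 (σ ^ 2) * ((∫ x : E3, ‖fderiv ℝ m x‖ ^ 2) + ∫ x : E3, ‖m x‖ ^ 2)
        ≤ ((starRingEnd ℂ) ((σ : ℂ) + (μ : ℂ) * Complex.I)
              * ((∫ x : E3, (ρ x)⁻¹ * ‖fderiv ℝ m x‖ ^ 2 : ℝ) : ℂ)
            + ((σ : ℂ) + (μ : ℂ) * Complex.I)
              * ((‖(σ : ℂ) + (μ : ℂ) * Complex.I‖ : ℝ) : ℂ) ^ 2
              * ((∫ x : E3, (k x)⁻¹ * ‖m x‖ ^ 2 : ℝ) : ℂ)).re := by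
  have hc0 : (0:ℝ) < c := lt_of_lt_of_le one_pos hc
  refine ⟨c⁻¹, inv_pos.mpr hc0, ?_⟩
  intro σ μ hσ ρ k hρ hk m hI1 hI2 hJ1 hJ2
  set I1 := ∫ x : E3, ‖fderiv ℝ m x‖ ^ 2 with hI1d
  set I2 := ∫ x : E3, ‖m x‖ ^ 2 with hI2d
  set J1 := ∫ x : E3, (ρ x)⁻¹ * ‖fderiv ℝ m x‖ ^ 2 with hJ1d
  set J2 := ∫ x : E3, (k x)⁻¹ * ‖m x‖ ^ 2 with hJ2d
  have habs : (‖(σ : ℂ) + (μ : ℂ) * Complex.I‖) ^ 2 = σ ^ 2 + μ ^ 2 := by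
    rw [Complex.sq_norm, Complex.normSq_apply]
    simp; ring
  have hRHS : ((starRingEnd ℂ) ((σ : ℂ) + (μ : ℂ) * Complex.I)
              * ((J1 : ℝ) : ℂ)
            + ((σ : ℂ) + (μ : ℂ) * Complex.I)
              * ((‖(σ : ℂ) + (μ : ℂ) * Complex.I‖ : ℝ) : ℂ) ^ 2
              * ((J2 : ℝ) : ℂ)).re = σ * J1 + σ * (σ ^ 2 + μ ^ 2) * J2 := by
    have : ((‖(σ : ℂ) + (μ : ℂ) * Complex.I‖ : ℝ) : ℂ) ^ 2
        = ((σ ^ 2 + μ ^ 2 : ℝ) : ℂ) := by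
      rw [← Complex.ofReal_pow, habs]
    rw [this]
    simp only [Complex.add_re, Complex.mul_re, Complex.add_im, Complex.mul_im,
      Complex.ofReal_re, Complex.ofReal_im, Complex.I_re, Complex.I_im,
      map_add, map_mul, Complex.conj_ofReal, Complex.conj_I, Complex.neg_re, Complex.neg_im]
    ring
  rw [hRHS]
  -- pointwise bounds
  have hI1nn : 0 ≤ I1 := integral_nonneg fun x => by positivity
  have hI2nn : 0 ≤ I2 := integral_nonneg fun x => by positivity
  have hbound1 : c⁻¹ * I1 ≤ J1 := by
    rw [hI1d, hJ1d, ← MeasureTheory.integral_const_mul]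
    refine integral_mono (hI1.const_mul _) hJ1 fun x => ?_
    have hρ0 : 0 < ρ x := lt_of_lt_of_le (inv_pos.mpr hc0) (hρ x).1
    exact mul_le_mul_of_nonneg_right (inv_anti₀ hρ0 (hρ x).2) (by positivity)
  have hbound2 : c⁻¹ * I2 ≤ J2 := by
    rw [hI2d, hJ2d, ← MeasureTheory.integral_const_mul]
    refine integral_mono (hI2.const_mul _) hJ2 fun x => ?_
    have hk0 : 0 < k x := lt_of_lt_of_le (inv_pos.mpr hc0) (hk x).1
    exact mul_le_mul_of_nonneg_right (inv_anti₀ hk0 (hk x).2) (by positivity)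
  have hmin1 : min 1 (σ ^ 2) ≤ 1 := min_le_left _ _
  have hmin2 : min 1 (σ ^ 2) ≤ σ ^ 2 := min_le_right _ _
  have hmnn : 0 ≤ min 1 (σ ^ 2) := le_min one_pos.le (by positivity)
  have hJ1nn : 0 ≤ J1 := le_trans (mul_nonneg (inv_nonneg.mpr hc0.le) hI1nn) hbound1
  have hJ2nn : 0 ≤ J2 := le_trans (mul_nonneg (inv_nonneg.mpr hc0.le) hI2nn) hbound2
  have h1 : c⁻¹ * σ * min 1 (σ ^ 2) * I1 ≤ σ * J1 := by
    calc c⁻¹ * σ * min 1 (σ ^ 2) * I1 ≤ c⁻¹ * σ * 1 * I1 := by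
          apply mul_le_mul_of_nonneg_right _ hI1nn
          apply mul_le_mul_of_nonneg_left hmin1 (by positivity)
      _ = σ * (c⁻¹ * I1) := by ring
      _ ≤ σ * J1 := mul_le_mul_of_nonneg_left hbound1 hσ.le
  have h2 : c⁻¹ * σ * min 1 (σ ^ 2) * I2 ≤ σ * (σ ^ 2 + μ ^ 2) * J2 := by
    calc c⁻¹ * σ * min 1 (σ ^ 2) * I2 ≤ c⁻¹ * σ * σ ^ 2 * I2 := by
          apply mul_le_mul_of_nonneg_right _ hI2nn
          apply mul_le_mul_of_nonneg_left hmin2 (by positivity)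
      _ = σ * σ ^ 2 * (c⁻¹ * I2) := by ring
      _ ≤ σ * σ ^ 2 * J2 := mul_le_mul_of_nonneg_left hbound2 (by positivity)
      _ ≤ σ * (σ ^ 2 + μ ^ 2) * J2 := by
          apply mul_le_mul_of_nonneg_right _ hJ2nn
          apply mul_le_mul_of_nonneg_left _ hσ.le
          nlinarith [sq_nonneg μ]
  nlinarith [h1, h2]
end
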